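/- sp(3) is the internal direct sum h ⊕ m₁ ⊕ m₂ ⊕ m₃, and the brackets satisfy [m₁, m₂] ⊆ m₃, [m₂, m₃] ⊆ m₁, [m₃, m₁] ⊆ m₂, each of these three bracket spaces being nonzero, and [mᵢ, mᵢ] ⊆ h for i = 1, 2, 3. -/

import Mathlib

open Quaternion

namespace Sp3

/-- `M₁(x) ∈ sp(3)` has entry `x` in position `(1,2)`, `−x̄` in position `(2,1)`, zeros
elsewhere (indices `0,1,2` correspond to the paper's `1,2,3`). -/
noncomputable def M1 (x : ℍ[ℝ]) : Matrix (Fin 3) (Fin 3) ℍ[ℝ] :=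
  Matrix.single 0 1 x - Matrix.single 1 0 (star x)

/-- `M₂(y) ∈ sp(3)` has entry `y` in position `(1,3)`, `−ȳ` in position `(3,1)`. -/
noncomputable def M2 (y : ℍ[ℝ]) : Matrix (Fin 3) (Fin 3) ℍ[ℝ] :=
  Matrix.single 0 2 y - Matrix.single 2 0 (star y)

/-- `M₃(z) ∈ sp(3)` has entry `z` in position `(2,3)`, `−z̄` in position `(3,2)`. -/
noncomputable def M3 (z : ℍ[ℝ]) : Matrix (Fin 3) (Fin 3) ℍ[ℝ] :=
  Matrix.single 1 2 z - Matrix.single 2 1 (star z)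

/-- Membership in `h ⊂ sp(3)`: the diagonal matrices whose diagonal entries are purely
imaginary quaternions. -/
def InH (X : Matrix (Fin 3) (Fin 3) ℍ[ℝ]) : Prop :=
  (∀ i j : Fin 3, i ≠ j → X i j = 0) ∧ (∀ i : Fin 3, (X i i).re = 0)

/-- The element of `m = m₁ ⊕ m₂ ⊕ m₃` with coordinates `(x, y, z) ∈ ℍ³`. -/
noncomputable def Mm (v : ℍ[ℝ] × ℍ[ℝ] × ℍ[ℝ]) : Matrix (Fin 3) (Fin 3) ℍ[ℝ] :=
  M1 v.1 + M2 v.2.1 + M3 v.2.2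

/-- The off-diagonal part of `X`, i.e. the projection of `X ∈ sp(3)` onto `m` along `h`. -/
noncomputable def offDiag (X : Matrix (Fin 3) (Fin 3) ℍ[ℝ]) : Matrix (Fin 3) (Fin 3) ℍ[ℝ] :=
  Matrix.of fun i j => if i = j then 0 else X i j

end Sp3

open Sp3

private lemma qstar_of_re (a : ℍ[ℝ]) (h : a.re = 0) : star a = -a := by
  ext <;> simp [h]

private lemma qre_of_star (a : ℍ[ℝ]) (h : star a = -a) : a.re = 0 := by
  have := congrArg QuaternionAlgebra.re h
  simp at this; linarith

private lemma M1_diag (w : ℍ[ℝ]) (i : Fin 3) : M1 w i i = 0 := by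
  fin_cases i <;> simp [M1, Matrix.single, Matrix.sub_apply]

private lemma M2_diag (w : ℍ[ℝ]) (i : Fin 3) : M2 w i i = 0 := by
  fin_cases i <;> simp [M2, Matrix.single, Matrix.sub_apply]

private lemma M3_diag (w : ℍ[ℝ]) (i : Fin 3) : M3 w i i = 0 := by
  fin_cases i <;> simp [M3, Matrix.single, Matrix.sub_apply]

private noncomputable def diagm (a b c : ℍ[ℝ]) : Matrix (Fin 3) (Fin 3) ℍ[ℝ] :=
  Matrix.of fun i j => if i = j then (if i = 0 then a else if i = 1 then b else c) else 0

private lemma inH_diagm (a b c : ℍ[ℝ]) (ha : a.re = 0) (hb : b.re = 0) (hc : c.re = 0) :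
    InH (diagm a b c) := by
  constructor
  · intro i j h
    simp [diagm, h]
  · intro i
    fin_cases i <;> simp [diagm, ha, hb, hc]

private lemma bracket11 (x x' : ℍ[ℝ]) :
    ⁅M1 x, M1 x'⁆ = diagm (x' * star x - x * star x') (star x' * x - star x * x') 0 := by
  refine Matrix.ext fun i j => ?_
  fin_cases i <;> fin_cases j <;>
    simp [Ring.lie_def, M1, diagm, Matrix.mul_apply, Fin.sum_univ_three,
      Matrix.single, Matrix.sub_apply] <;> abel

private lemma bracket22 (y y' : ℍ[ℝ]) :
    ⁅M2 y, M2 y'⁆ = diagm (y' * star y - y * star y') 0 (star y' * y - star y * y') := by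
  refine Matrix.ext fun i j => ?_
  fin_cases i <;> fin_cases j <;>
    simp [Ring.lie_def, M2, diagm, Matrix.mul_apply, Fin.sum_univ_three,
      Matrix.single, Matrix.sub_apply] <;> abel

private lemma bracket33 (z z' : ℍ[ℝ]) :
    ⁅M3 z, M3 z'⁆ = diagm 0 (z' * star z - z * star z') (star z' * z - star z * z') := by
  refine Matrix.ext fun i j => ?_
  fin_cases i <;> fin_cases j <;>
    simp [Ring.lie_def, M3, diagm, Matrix.mul_apply, Fin.sum_univ_three,
      Matrix.single, Matrix.sub_apply] <;> abel

private lemma re_comm (a b : ℍ[ℝ]) : (b * star a - a * star b).re = 0 := by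
  simp [Quaternion.re_sub, Quaternion.re_mul]
  ring

private lemma re_comm' (a b : ℍ[ℝ]) : (star b * a - star a * b).re = 0 := by
  simp [Quaternion.re_sub, Quaternion.re_mul]
  ring

private lemma bracket12 (x y : ℍ[ℝ]) : ⁅M1 x, M2 y⁆ = M3 (-(star x * y)) := by
  refine Matrix.ext fun i j => ?_
  fin_cases i <;> fin_cases j <;>
    simp [Ring.lie_def, M1, M2, M3, Matrix.mul_apply, Fin.sum_univ_three,
      Matrix.single, Matrix.sub_apply]

private lemma bracket23 (y z : ℍ[ℝ]) : ⁅M2 y, M3 z⁆ = M1 (-(y * star z)) := by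
  refine Matrix.ext fun i j => ?_
  fin_cases i <;> fin_cases j <;>
    simp [Ring.lie_def, M1, M2, M3, Matrix.mul_apply, Fin.sum_univ_three,
      Matrix.single, Matrix.sub_apply]

private lemma bracket31 (z x : ℍ[ℝ]) : ⁅M3 z, M1 x⁆ = M2 (-(x * z)) := by
  refine Matrix.ext fun i j => ?_
  fin_cases i <;> fin_cases j <;>
    simp [Ring.lie_def, M1, M2, M3, Matrix.mul_apply, Fin.sum_univ_three,
      Matrix.single, Matrix.sub_apply]

open Sp3 in
/-- `sp(3)` is the internal direct sum `h ⊕ m₁ ⊕ m₂ ⊕ m₃` (each summand is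
contained in `sp(3)`, and every `X ∈ sp(3)` decomposes uniquely as a sum of a diagonal
matrix with purely imaginary entries and elements `M₁(x), M₂(y), M₃(z)`); moreover
`[m₁, m₂] ⊆ m₃`, `[m₂, m₃] ⊆ m₁`, `[m₃, m₁] ⊆ m₂`, each of these three bracket spaces is
nonzero, and `[mᵢ, mᵢ] ⊆ h` for `i = 1, 2, 3`. -/
theorem statement14 :
    (∀ X : Matrix (Fin 3) (Fin 3) ℍ[ℝ], InH X → Matrix.conjTranspose X = -X) ∧
    (∀ x : ℍ[ℝ], Matrix.conjTranspose (M1 x) = -(M1 x)) ∧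
    (∀ y : ℍ[ℝ], Matrix.conjTranspose (M2 y) = -(M2 y)) ∧
    (∀ z : ℍ[ℝ], Matrix.conjTranspose (M3 z) = -(M3 z)) ∧
    (∀ X : Matrix (Fin 3) (Fin 3) ℍ[ℝ], Matrix.conjTranspose X = -X →
      ∃! p : Matrix (Fin 3) (Fin 3) ℍ[ℝ] × ℍ[ℝ] × ℍ[ℝ] × ℍ[ℝ],
        InH p.1 ∧ X = p.1 + M1 p.2.1 + M2 p.2.2.1 + M3 p.2.2.2) ∧
    (∀ x y : ℍ[ℝ], ∃ z : ℍ[ℝ], ⁅M1 x, M2 y⁆ = M3 z) ∧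
    (∃ x y : ℍ[ℝ], ⁅M1 x, M2 y⁆ ≠ 0) ∧
    (∀ y z : ℍ[ℝ], ∃ x : ℍ[ℝ], ⁅M2 y, M3 z⁆ = M1 x) ∧
    (∃ y z : ℍ[ℝ], ⁅M2 y, M3 z⁆ ≠ 0) ∧
    (∀ z x : ℍ[ℝ], ∃ y : ℍ[ℝ], ⁅M3 z, M1 x⁆ = M2 y) ∧
    (∃ z x : ℍ[ℝ], ⁅M3 z, M1 x⁆ ≠ 0) ∧
    (∀ x x' : ℍ[ℝ], InH ⁅M1 x, M1 x'⁆) ∧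
    (∀ y y' : ℍ[ℝ], InH ⁅M2 y, M2 y'⁆) ∧
    (∀ z z' : ℍ[ℝ], InH ⁅M3 z, M3 z'⁆) := by
  refine ⟨?_, ?_, ?_, ?_, ?_, ?_, ?_, ?_, ?_, ?_, ?_, ?_, ?_, ?_⟩
  · -- h ⊆ sp(3)
    rintro X ⟨hoff, hre⟩
    refine Matrix.ext fun i j => ?_
    by_cases h : i = j
    · subst h
      simpa [Matrix.conjTranspose_apply] using qstar_of_re _ (hre i)
    · simp [Matrix.conjTranspose_apply, hoff i j h, hoff j i (Ne.symm h)]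
  · intro x
    refine Matrix.ext fun i j => ?_
    fin_cases i <;> fin_cases j <;>
      simp [M1, Matrix.conjTranspose_apply, Matrix.single, Matrix.sub_apply]
  · intro y
    refine Matrix.ext fun i j => ?_
    fin_cases i <;> fin_cases j <;>
      simp [M2, Matrix.conjTranspose_apply, Matrix.single, Matrix.sub_apply]
  · intro z
    refine Matrix.ext fun i j => ?_
    fin_cases i <;> fin_cases j <;>
      simp [M3, Matrix.conjTranspose_apply, Matrix.single, Matrix.sub_apply]
  · -- direct sum decomposition
    intro X hX
    have hent : ∀ i j : Fin 3, star (X j i) = -X i j := fun i j => by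
      have := congrFun (congrFun hX i) j
      simpa [Matrix.conjTranspose_apply] using this
    set D : Matrix (Fin 3) (Fin 3) ℍ[ℝ] :=
      Matrix.of (fun i j => if i = j then X i i else 0) with hD
    refine ⟨(D, X 0 1, X 0 2, X 1 2), ⟨⟨fun i j h => by simp [hD, h], fun i => by
        simpa [hD] using qre_of_star _ (hent i i)⟩, ?_⟩, ?_⟩
    · -- X equals the decomposition
      have h10 : X 1 0 = -star (X 0 1) := by rw [hent 1 0, neg_neg]
      have h20 : X 2 0 = -star (X 0 2) := by rw [hent 2 0, neg_neg]
      have h21 : X 2 1 = -star (X 1 2) := by rw [hent 2 1, neg_neg]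
      refine Matrix.ext fun i j => ?_
      fin_cases i <;> fin_cases j <;>
        simp [hD, M1, M2, M3, Matrix.single, Matrix.sub_apply, Matrix.add_apply,
          h10, h20, h21]
    · -- uniqueness
      rintro ⟨qh, qx, qy, qz⟩ ⟨⟨hq1, hq2⟩, hqX⟩
      have hq1' : ∀ i j : Fin 3, i ≠ j → qh i j = 0 := hq1
      have e : ∀ i j : Fin 3,
          X i j = qh i j + M1 qx i j + M2 qy i j + M3 qz i j := fun i j => by
        have := congrFun (congrFun hqX i) j
        simpa [Matrix.add_apply] using this
      have hx : qx = X 0 1 := by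
        have h := e 0 1
        simp [M1, M2, M3, Matrix.single, Matrix.sub_apply,
          hq1' 0 1 (by decide)] at h
        exact h.symm
      have hy : qy = X 0 2 := by
        have h := e 0 2
        simp [M1, M2, M3, Matrix.single, Matrix.sub_apply,
          hq1' 0 2 (by decide)] at h
        exact h.symm
      have hz : qz = X 1 2 := by
        have h := e 1 2
        simp [M1, M2, M3, Matrix.single, Matrix.sub_apply,
          hq1' 1 2 (by decide)] at h
        exact h.symm
      have hqh : qh = D := by
        refine Matrix.ext fun i j => ?_
        by_cases h : i = j
        · subst h
          have h := e i i
          rw [M1_diag, M2_diag, M3_diag, add_zero, add_zero, add_zero] at h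
          simp [hD, h]
        · simp [hD, h, hq1' i j h]
      simp only [hqh, hx, hy, hz]
  · exact fun x y => ⟨-(star x * y), bracket12 x y⟩
  · refine ⟨1, 1, ?_⟩
    rw [bracket12]
    intro h
    have := congrFun (congrFun h 1) 2
    simp [M3, Matrix.single, Matrix.sub_apply] at this
  · exact fun y z => ⟨-(y * star z), bracket23 y z⟩
  · refine ⟨1, 1, ?_⟩
    rw [bracket23]
    intro h
    have := congrFun (congrFun h 0) 1
    simp [M1, Matrix.single, Matrix.sub_apply] at this
  · exact fun z x => ⟨-(x * z), bracket31 z x⟩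
  · refine ⟨1, 1, ?_⟩
    rw [bracket31]
    intro h
    have := congrFun (congrFun h 0) 2
    simp [M2, Matrix.single, Matrix.sub_apply] at this
  · intro x x'
    rw [bracket11]
    exact inH_diagm _ _ _ (re_comm _ _) (re_comm' _ _) (by simp)
  · intro y y'
    rw [bracket22]
    exact inH_diagm _ _ _ (re_comm _ _) (by simp) (re_comm' _ _)
  · intro z z'
    rw [bracket33]
    exact inH_diagm _ _ _ (by simp) (re_comm _ _) (re_comm' _ _)
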